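/- Suppose b_{ij} = 0 whenever i ≡ j (mod 2) (the quiver of B is bipartite), and suppose that for all i,j the quiver of B has as many length-2 paths from i to j as from j to i, i.e. ∑_{k} [b_{ik}]_+·[b_{kj}]_+ = ∑_{k} [b_{jk}]_+·[b_{ki}]_+ for all i,j. Then the mutations μ_i for i odd pairwise commute when applied to (y,B), as do the μ_i for i even. Moreover μ_{2n−1}∘⋯∘μ_3∘μ_1(y,B) = (y′, −B) where y′_j = y_j^{−1} for j odd and y′_j = y_j·∏_{k} y_k^{[b_{kj}]_+}·(1+y_k)^{−b_{kj}} for j even; and μ_{2n}∘⋯∘μ_4∘μ_2(y,B) = (y″, −B) where y″_j = y_j^{−1} for j even and y″_j = y_j·∏_{k} y_k^{[b_{kj}]_+}·(1+y_k)^{−b_{kj}} for j odd. -/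

import Mathlib

open scoped Classical

noncomputable section

/-- The `Y`-seed mutation `μ_k` acting on a seed `(y, B)`, where the tuple
`y = (y₁,…,y_{2n})` and the `2n × 2n` matrix `B` are encoded as `2n`-periodic
functions on `ℤ` (the index `j` representing the vertex `j mod 2n`):
`y'_k = y_k⁻¹`, `y'_j = y_j · y_k^{[b_{kj}]_+} · (1+y_k)^{−b_{kj}}` for `j ≠ k`,
`b'_{ij} = −b_{ij}` if `i = k` or `j = k`, and
`b'_{ij} = b_{ij} + sgn(b_{ik})·[b_{ik} b_{kj}]_+` otherwise. -/
def mutY {K : Type*} [Field K] (n : ℕ) (k : ℤ)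
    (p : (ℤ → K) × (ℤ → ℤ → ℤ)) : (ℤ → K) × (ℤ → ℤ → ℤ) :=
  (fun j => if j ≡ k [ZMOD (2*n)] then (p.1 k)⁻¹
    else p.1 j * p.1 k ^ (max (p.2 k j) 0) * (1 + p.1 k) ^ (-(p.2 k j)),
   fun i j => if i ≡ k [ZMOD (2*n)] ∨ j ≡ k [ZMOD (2*n)] then -(p.2 i j)
    else p.2 i j + (p.2 i k).sign * max (p.2 i k * p.2 k j) 0)

section AuxLemmas

lemma sign_max_eq (a b : ℤ) :
    a.sign * max (a * b) 0 = max a 0 * max b 0 - max (-a) 0 * max (-b) 0 := by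
  rcases lt_trichotomy a 0 with ha | rfl | ha
  · rcases lt_trichotomy b 0 with hb | rfl | hb
    · rw [Int.sign_eq_neg_one_of_neg ha, max_eq_left (mul_pos_of_neg_of_neg ha hb).le,
        max_eq_right ha.le, max_eq_left (by linarith : (0:ℤ) ≤ -a),
        max_eq_right hb.le, max_eq_left (by linarith : (0:ℤ) ≤ -b)]; ring
    · simp
    · rw [Int.sign_eq_neg_one_of_neg ha, max_eq_right (mul_neg_of_neg_of_pos ha hb).le,
        max_eq_right ha.le, max_eq_left (by linarith : (0:ℤ) ≤ -a),
        max_eq_left hb.le, max_eq_right (by linarith : -b ≤ (0:ℤ))]; ring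
  · simp
  · rcases lt_trichotomy b 0 with hb | rfl | hb
    · rw [Int.sign_eq_one_of_pos ha, max_eq_right (mul_neg_of_pos_of_neg ha hb).le,
        max_eq_left ha.le, max_eq_right (by linarith : -a ≤ (0:ℤ)),
        max_eq_right hb.le, max_eq_left (by linarith : (0:ℤ) ≤ -b)]; ring
    · simp
    · rw [Int.sign_eq_one_of_pos ha, max_eq_left (mul_pos ha hb).le,
        max_eq_left ha.le, max_eq_right (by linarith : -a ≤ (0:ℤ)),
        max_eq_left hb.le, max_eq_right (by linarith : -b ≤ (0:ℤ))]; ring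

lemma periodic_cong {α : Type*} (m : ℤ) (f : ℤ → α) (hf : ∀ j, f (j + m) = f j)
    {i i' : ℤ} (h : i ≡ i' [ZMOD m]) : f i = f i' := by
  obtain ⟨t, ht⟩ := Int.modEq_iff_dvd.mp h
  have key : ∀ t : ℤ, f (i + m * t) = f i := by
    intro t
    induction t using Int.induction_on with
    | zero => simp
    | succ s ih => rw [show i + m * (s+1) = (i + m * s) + m by ring, hf, ih]
    | pred s ih =>
        have := hf (i + m * (-s - 1))
        rw [show i + m * (-s-1) + m = i + m * (-s) by ring] at this
        rw [← this, ih]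
  rw [show i' = i + m * t by linarith, key]

lemma not_modEq_of_lt (N a b : ℤ) (h1 : a ≠ b) (h2 : |b - a| < N) : ¬ a ≡ b [ZMOD N] := by
  intro h
  have hd : N ∣ b - a := Int.ModEq.dvd h
  have h3 : 0 < |b - a| := abs_pos.mpr (sub_ne_zero.mpr (Ne.symm h1))
  have h4 := Int.le_of_dvd h3 ((dvd_abs _ _).mpr hd)
  linarith

lemma Icc_split (n : ℕ) : Finset.Icc (1:ℤ) (2*n) =
    ((Finset.range n).image (fun t : ℕ => 2*(t:ℤ)+1)) ∪
    ((Finset.range n).image (fun t : ℕ => 2*(t:ℤ)+2)) := by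
  ext x
  simp only [Finset.mem_Icc, Finset.mem_union, Finset.mem_image, Finset.mem_range]
  constructor
  · rintro ⟨h1, h2⟩
    rcases Int.even_or_odd x with ⟨s, hs⟩ | ⟨s, hs⟩
    · refine Or.inr ⟨(s-1).toNat, ?_, ?_⟩ <;> omega
    · refine Or.inl ⟨s.toNat, ?_, ?_⟩ <;> omega
  · rintro (⟨t, ht, rfl⟩ | ⟨t, ht, rfl⟩) <;> constructor <;> omega

lemma Icc_disj (n : ℕ) :
    Disjoint ((Finset.range n).image (fun t : ℕ => 2*(t:ℤ)+1))
      ((Finset.range n).image (fun t : ℕ => 2*(t:ℤ)+2)) := by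
  rw [Finset.disjoint_left]
  intro a ha hb
  simp only [Finset.mem_image, Finset.mem_range] at ha hb
  obtain ⟨t, _, ht⟩ := ha
  obtain ⟨s, _, hs⟩ := hb
  omega

lemma prod_split {M : Type*} [CommMonoid M] (n : ℕ) (f : ℤ → M) :
    ∏ k ∈ Finset.Icc (1:ℤ) (2*n), f k =
      (∏ t ∈ Finset.range n, f (2*(t:ℤ)+1)) * ∏ t ∈ Finset.range n, f (2*(t:ℤ)+2) := by
  rw [Icc_split n, Finset.prod_union (Icc_disj n),
    Finset.prod_image (fun a _ b _ h => by omega), Finset.prod_image (fun a _ b _ h => by omega)]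

lemma sum_split {M : Type*} [AddCommMonoid M] (n : ℕ) (f : ℤ → M) :
    ∑ k ∈ Finset.Icc (1:ℤ) (2*n), f k =
      (∑ t ∈ Finset.range n, f (2*(t:ℤ)+1)) + ∑ t ∈ Finset.range n, f (2*(t:ℤ)+2) := by
  rw [Icc_split n, Finset.sum_union (Icc_disj n),
    Finset.sum_image (fun a _ b _ h => by omega), Finset.sum_image (fun a _ b _ h => by omega)]

lemma exists_mod_iff (n : ℕ) (hn : 1 ≤ n) (r j : ℤ) :
    (∃ t : ℕ, t < n ∧ j ≡ 2*(t:ℤ)+r [ZMOD (2*(n:ℤ))]) ↔ j ≡ r [ZMOD 2] := by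
  constructor
  · rintro ⟨t, _, h⟩
    exact (h.of_dvd ⟨n, rfl⟩).trans (Int.modEq_iff_dvd.mpr ⟨-(t:ℤ), by ring⟩)
  · intro h
    obtain ⟨c, hc⟩ := Int.modEq_iff_dvd.mp h
    set u : ℤ := -c with hu
    have h0 : (0:ℤ) < n := by exact_mod_cast hn
    have h2 : 0 ≤ u % (n:ℤ) := Int.emod_nonneg u (by omega)
    have h1 : u % (n:ℤ) < n := Int.emod_lt_of_pos u h0
    refine ⟨(u % (n:ℤ)).toNat, by omega, ?_⟩
    rw [Int.modEq_iff_dvd]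
    refine ⟨-(u / (n:ℤ)), ?_⟩
    have h3 : ((u % (n:ℤ)).toNat : ℤ) = u % (n:ℤ) := Int.toNat_of_nonneg h2
    have h4 := Int.emod_add_mul_ediv u (n:ℤ)
    rw [h3]
    have hj : j = r + 2*u := by omega
    rw [hj]; ring_nf; linarith [h4]

lemma odd_iff_mod (j : ℤ) : j ≡ 1 [ZMOD 2] ↔ Odd j := by
  rw [Int.modEq_iff_dvd, Int.odd_iff]
  omega

lemma even_iff_mod (j : ℤ) : j ≡ 2 [ZMOD 2] ↔ Even j := by
  rw [Int.modEq_iff_dvd, Int.even_iff]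
  omega

end AuxLemmas

section MutYAux
variable {K : Type*} [Field K]

lemma mutY_fst (n : ℕ) (k : ℤ) (p : (ℤ → K) × (ℤ → ℤ → ℤ)) (j : ℤ) :
    (mutY n k p).1 j = if j ≡ k [ZMOD (2*(n:ℤ))] then (p.1 k)⁻¹
      else p.1 j * p.1 k ^ (max (p.2 k j) 0) * (1 + p.1 k) ^ (-(p.2 k j)) := rfl

lemma mutY_snd (n : ℕ) (k : ℤ) (p : (ℤ → K) × (ℤ → ℤ → ℤ)) (i j : ℤ) :
    (mutY n k p).2 i j = if i ≡ k [ZMOD (2*(n:ℤ))] ∨ j ≡ k [ZMOD (2*(n:ℤ))] then -(p.2 i j)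
      else p.2 i j + (p.2 i k).sign * max (p.2 i k * p.2 k j) 0 := rfl

lemma mutY_congr (n : ℕ) (k l : ℤ) (p : (ℤ → K) × (ℤ → ℤ → ℤ))
    (h : k ≡ l [ZMOD (2*(n:ℤ))])
    (h1 : p.1 k = p.1 l) (h2 : ∀ j, p.2 k j = p.2 l j) (h3 : ∀ i, p.2 i k = p.2 i l) :
    mutY n k p = mutY n l p := by
  refine Prod.ext ?_ ?_
  · funext j
    rw [mutY_fst n k p j, mutY_fst n l p j, h1, h2 j]
    by_cases hjk : j ≡ k [ZMOD (2*(n:ℤ))]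
    · rw [if_pos hjk, if_pos (hjk.trans h)]
    · rw [if_neg hjk, if_neg (fun hh => hjk (hh.trans h.symm))]
  · funext i j
    rw [mutY_snd n k p i j, mutY_snd n l p i j, h2 j, h3 i]
    by_cases hA : i ≡ k [ZMOD (2*(n:ℤ))] ∨ j ≡ k [ZMOD (2*(n:ℤ))]
    · rw [if_pos hA,
        if_pos (show i ≡ l [ZMOD (2*(n:ℤ))] ∨ j ≡ l [ZMOD (2*(n:ℤ))] by
          rcases hA with h' | h'
          exacts [Or.inl (h'.trans h), Or.inr (h'.trans h)])]
    · rw [if_neg hA,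
        if_neg (show ¬(i ≡ l [ZMOD (2*(n:ℤ))] ∨ j ≡ l [ZMOD (2*(n:ℤ))]) by
          rintro (h' | h')
          exacts [hA (Or.inl (h'.trans h.symm)), hA (Or.inr (h'.trans h.symm))])]

lemma mutY_per (n : ℕ) (k : ℤ) (p : (ℤ → K) × (ℤ → ℤ → ℤ))
    (hp1 : ∀ i i' : ℤ, i ≡ i' [ZMOD (2*(n:ℤ))] → p.1 i = p.1 i')
    (hp2 : ∀ i i' j j' : ℤ, i ≡ i' [ZMOD (2*(n:ℤ))] → j ≡ j' [ZMOD (2*(n:ℤ))] →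
      p.2 i j = p.2 i' j') :
    (∀ i i' : ℤ, i ≡ i' [ZMOD (2*(n:ℤ))] → (mutY n k p).1 i = (mutY n k p).1 i') ∧
    (∀ i i' j j' : ℤ, i ≡ i' [ZMOD (2*(n:ℤ))] → j ≡ j' [ZMOD (2*(n:ℤ))] →
      (mutY n k p).2 i j = (mutY n k p).2 i' j') := by
  constructor
  · intro i i' h
    rw [mutY_fst n k p i, mutY_fst n k p i']
    by_cases hik : i ≡ k [ZMOD (2*(n:ℤ))]
    · rw [if_pos hik, if_pos (h.symm.trans hik)]
    · rw [if_neg hik, if_neg (fun hh => hik (h.trans hh)), hp1 i i' h,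
        hp2 k k i i' (Int.ModEq.refl k) h]
  · intro i i' j j' hi hj
    rw [mutY_snd n k p i j, mutY_snd n k p i' j']
    by_cases hA : i ≡ k [ZMOD (2*(n:ℤ))] ∨ j ≡ k [ZMOD (2*(n:ℤ))]
    · have hA' : i' ≡ k [ZMOD (2*(n:ℤ))] ∨ j' ≡ k [ZMOD (2*(n:ℤ))] := by
        rcases hA with h' | h'
        exacts [Or.inl (hi.symm.trans h'), Or.inr (hj.symm.trans h')]
      rw [if_pos hA, if_pos hA', hp2 i i' j j' hi hj]
    · have hA' : ¬(i' ≡ k [ZMOD (2*(n:ℤ))] ∨ j' ≡ k [ZMOD (2*(n:ℤ))]) := by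
        rintro (h' | h')
        exacts [hA (Or.inl (hi.trans h')), hA (Or.inr (hj.trans h'))]
      rw [if_neg hA, if_neg hA', hp2 i i' j j' hi hj,
        hp2 i i' k k hi (Int.ModEq.refl k), hp2 k k j j' (Int.ModEq.refl k) hj]

lemma mutY_comm (n : ℕ) (k l : ℤ) (p : (ℤ → K) × (ℤ → ℤ → ℤ))
    (hkl : ¬ k ≡ l [ZMOD (2*(n:ℤ))])
    (h1 : ∀ j, j ≡ l [ZMOD (2*(n:ℤ))] → p.2 k j = 0 ∧ p.2 j k = 0)
    (h2 : ∀ j, j ≡ k [ZMOD (2*(n:ℤ))] → p.2 l j = 0 ∧ p.2 j l = 0) :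
    mutY n k (mutY n l p) = mutY n l (mutY n k p) := by
  have hlk : ¬ l ≡ k [ZMOD (2*(n:ℤ))] := fun h => hkl h.symm
  have q1k : (mutY n l p).1 k = p.1 k := by
    rw [mutY_fst, if_neg hkl, (h1 l (Int.ModEq.refl l)).2]
    simp
  have q2kj : ∀ j, (mutY n l p).2 k j = p.2 k j := by
    intro j
    rw [mutY_snd]
    by_cases hjl : j ≡ l [ZMOD (2*(n:ℤ))]
    · rw [if_pos (Or.inr hjl), (h1 j hjl).1]; simp
    · rw [if_neg (by tauto), (h1 l (Int.ModEq.refl l)).1]; simp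
  have q2ik : ∀ i, (mutY n l p).2 i k = p.2 i k := by
    intro i
    rw [mutY_snd]
    by_cases hil : i ≡ l [ZMOD (2*(n:ℤ))]
    · rw [if_pos (Or.inl hil), (h1 i hil).2]; simp
    · rw [if_neg (by tauto), (h1 l (Int.ModEq.refl l)).2]; simp
  have r1l : (mutY n k p).1 l = p.1 l := by
    rw [mutY_fst, if_neg hlk, (h2 k (Int.ModEq.refl k)).2]
    simp
  have r2lj : ∀ j, (mutY n k p).2 l j = p.2 l j := by
    intro j
    rw [mutY_snd]
    by_cases hjk : j ≡ k [ZMOD (2*(n:ℤ))]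
    · rw [if_pos (Or.inr hjk), (h2 j hjk).1]; simp
    · rw [if_neg (by tauto), (h2 k (Int.ModEq.refl k)).1]; simp
  have r2il : ∀ i, (mutY n k p).2 i l = p.2 i l := by
    intro i
    rw [mutY_snd]
    by_cases hik : i ≡ k [ZMOD (2*(n:ℤ))]
    · rw [if_pos (Or.inl hik), (h2 i hik).2]; simp
    · rw [if_neg (by tauto), (h2 k (Int.ModEq.refl k)).2]; simp
  refine Prod.ext ?_ ?_
  · funext j
    rw [mutY_fst n k (mutY n l p) j, q1k, q2kj j, mutY_fst n l (mutY n k p) j, r1l, r2lj j]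
    by_cases hjk : j ≡ k [ZMOD (2*(n:ℤ))]
    · have hjl : ¬ j ≡ l [ZMOD (2*(n:ℤ))] := fun h => hkl (hjk.symm.trans h)
      rw [if_pos hjk, if_neg hjl, (h2 j hjk).1, mutY_fst n k p j, if_pos hjk]
      simp
    · by_cases hjl : j ≡ l [ZMOD (2*(n:ℤ))]
      · rw [if_neg hjk, if_pos hjl, (h1 j hjl).1, mutY_fst n l p j, if_pos hjl]
        simp
      · rw [if_neg hjk, if_neg hjl, mutY_fst n l p j, if_neg hjl, mutY_fst n k p j, if_neg hjk]
        ring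
  · funext i j
    rw [mutY_snd n k (mutY n l p) i j, q2ik i, q2kj j,
      mutY_snd n l (mutY n k p) i j, r2il i, r2lj j]
    by_cases hA : i ≡ k [ZMOD (2*(n:ℤ))] ∨ j ≡ k [ZMOD (2*(n:ℤ))]
    · by_cases hB : i ≡ l [ZMOD (2*(n:ℤ))] ∨ j ≡ l [ZMOD (2*(n:ℤ))]
      · rw [if_pos hA, if_pos hB, mutY_snd n l p i j, if_pos hB, mutY_snd n k p i j, if_pos hA]
      · rw [if_pos hA, if_neg hB, mutY_snd n l p i j, if_neg hB, mutY_snd n k p i j, if_pos hA]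
        rcases hA with hik | hjk
        · rw [(h2 i hik).2]; simp
        · rw [(h2 j hjk).1]; simp
    · by_cases hB : i ≡ l [ZMOD (2*(n:ℤ))] ∨ j ≡ l [ZMOD (2*(n:ℤ))]
      · rw [if_neg hA, if_pos hB, mutY_snd n l p i j, if_pos hB, mutY_snd n k p i j, if_neg hA]
        rcases hB with hil | hjl
        · rw [(h1 i hil).2]; simp
        · rw [(h1 j hjl).1]; simp
      · rw [if_neg hA, if_neg hB, mutY_snd n l p i j, if_neg hB, mutY_snd n k p i j, if_neg hA]
        ring

end MutYAux

section Fold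
variable {K : Type*} [Field K]

lemma foldl_inv (n : ℕ) (r : ℤ) (y : ℤ → K) (B : ℤ → ℤ → ℤ)
    (hyper : ∀ j : ℤ, y (j + 2*n) = y j)
    (hbip : ∀ i j : ℤ, i ≡ j [ZMOD 2] → B i j = 0)
    (m : ℕ) (hm : m ≤ n) :
    (∀ j : ℤ, ((List.range m).foldl (fun q t => mutY n (2*(t:ℤ)+r) q) (y, B)).1 j =
      if ∃ t : ℕ, t < m ∧ j ≡ 2*(t:ℤ)+r [ZMOD (2*(n:ℤ))] then (y j)⁻¹
      else y j * ∏ t ∈ Finset.range m,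
        y (2*(t:ℤ)+r) ^ max (B (2*(t:ℤ)+r) j) 0 * (1+y (2*(t:ℤ)+r)) ^ (-(B (2*(t:ℤ)+r) j))) ∧
    (∀ i j : ℤ, ((List.range m).foldl (fun q t => mutY n (2*(t:ℤ)+r) q) (y, B)).2 i j =
      (if (∃ t : ℕ, t < m ∧ i ≡ 2*(t:ℤ)+r [ZMOD (2*(n:ℤ))]) ∨
          (∃ t : ℕ, t < m ∧ j ≡ 2*(t:ℤ)+r [ZMOD (2*(n:ℤ))]) then -(B i j) else B i j)
      + (if ¬ i ≡ r [ZMOD 2] ∧ ¬ j ≡ r [ZMOD 2] then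
          ∑ t ∈ Finset.range m, (B i (2*(t:ℤ)+r)).sign * max (B i (2*(t:ℤ)+r) * B (2*(t:ℤ)+r) j) 0
         else 0)) := by
  induction m with
  | zero => simp
  | succ m ih =>
    have hmn : m < n := lt_of_lt_of_le (Nat.lt_succ_self m) hm
    obtain ⟨ih1, ih2⟩ := ih (le_of_lt hmn)
    set p := (List.range m).foldl (fun q t => mutY n (2*(t:ℤ)+r) q) (y, B) with hp
    have hfold : (List.range (m+1)).foldl (fun q t => mutY n (2*(t:ℤ)+r) q) (y, B)
        = mutY n (2*(m:ℤ)+r) p := by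
      rw [hp]; simp [List.range_succ]
    have two_dvd : (2:ℤ) ∣ 2*(n:ℤ) := ⟨n, rfl⟩
    have hpar2 : ∀ t : ℕ, (2*(t:ℤ)+r) ≡ r [ZMOD 2] := fun t => Int.modEq_iff_dvd.mpr ⟨-t, by ring⟩
    have hparj : ∀ (j : ℤ) (t : ℕ), j ≡ 2*(t:ℤ)+r [ZMOD (2*(n:ℤ))] → j ≡ r [ZMOD 2] :=
      fun j t h => (h.of_dvd two_dvd).trans (hpar2 t)
    have hMpar : ∀ (j : ℤ), ¬ j ≡ r [ZMOD 2] →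
        ∀ m' : ℕ, ¬ ∃ t : ℕ, t < m' ∧ j ≡ 2*(t:ℤ)+r [ZMOD (2*(n:ℤ))] := by
      rintro j hj m' ⟨t, _, h⟩; exact hj (hparj j t h)
    have hkne : ∀ t : ℕ, t < m → ¬ (2*(m:ℤ)+r) ≡ 2*(t:ℤ)+r [ZMOD (2*(n:ℤ))] := by
      intro t ht
      apply not_modEq_of_lt
      · omega
      · have he : (2*(t:ℤ)+r) - (2*(m:ℤ)+r) = 2*(t:ℤ) - 2*(m:ℤ) := by ring
        rw [he, abs_of_nonpos (by omega)]
        omega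
    have hk2 : (2*(m:ℤ)+r) ≡ r [ZMOD 2] := hpar2 m
    have hMk : ¬ ∃ t : ℕ, t < m ∧ (2*(m:ℤ)+r) ≡ 2*(t:ℤ)+r [ZMOD (2*(n:ℤ))] := by
      rintro ⟨t, ht, h⟩; exact hkne t ht h
    have hMj_of_k : ∀ j, j ≡ (2*(m:ℤ)+r) [ZMOD (2*(n:ℤ))] →
        ¬ ∃ t : ℕ, t < m ∧ j ≡ 2*(t:ℤ)+r [ZMOD (2*(n:ℤ))] := by
      rintro j hj ⟨t, ht, h⟩; exact hkne t ht (hj.symm.trans h)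
    have hp1k : p.1 (2*(m:ℤ)+r) = y (2*(m:ℤ)+r) := by
      rw [ih1, if_neg hMk, Finset.prod_eq_one, mul_one]
      intro t _
      rw [hbip (2*(t:ℤ)+r) (2*(m:ℤ)+r) ((hpar2 t).trans hk2.symm)]
      simp
    have hp2kj : ∀ j, p.2 (2*(m:ℤ)+r) j = if j ≡ r [ZMOD 2] then 0 else B (2*(m:ℤ)+r) j := by
      intro j
      rw [ih2, if_neg (fun h : (¬(2*(m:ℤ)+r) ≡ r [ZMOD 2] ∧ ¬ j ≡ r [ZMOD 2]) => h.1 hk2), add_zero]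
      by_cases hj2 : j ≡ r [ZMOD 2]
      · rw [if_pos hj2, hbip _ _ (hk2.trans hj2.symm)]
        simp
      · rw [if_neg hj2, if_neg (by rintro (h | h); exacts [hMk h, hMpar j hj2 m h])]
    have hp2ik : ∀ i, p.2 i (2*(m:ℤ)+r) = if i ≡ r [ZMOD 2] then 0 else B i (2*(m:ℤ)+r) := by
      intro i
      rw [ih2, if_neg (fun h : (¬i ≡ r [ZMOD 2] ∧ ¬(2*(m:ℤ)+r) ≡ r [ZMOD 2]) => h.2 hk2), add_zero]
      by_cases hi2 : i ≡ r [ZMOD 2]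
      · rw [if_pos hi2, hbip _ _ (hi2.trans hk2.symm)]
        simp
      · rw [if_neg hi2, if_neg (by rintro (h | h); exacts [hMpar i hi2 m h, hMk h])]
    constructor
    · intro j
      rw [hfold, mutY_fst n (2*(m:ℤ)+r) p j, hp1k]
      by_cases hjk : j ≡ 2*(m:ℤ)+r [ZMOD (2*(n:ℤ))]
      · rw [if_pos hjk, if_pos ⟨m, Nat.lt_succ_self m, hjk⟩,
          periodic_cong (2*(n:ℤ)) y (by exact_mod_cast hyper) hjk]
      · rw [if_neg hjk, hp2kj j]
        by_cases hj2 : j ≡ r [ZMOD 2]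
        · rw [if_pos hj2]
          simp only [max_self, zpow_zero, mul_one, neg_zero]
          rw [ih1]
          by_cases hMj : ∃ t : ℕ, t < m ∧ j ≡ 2*(t:ℤ)+r [ZMOD (2*(n:ℤ))]
          · obtain ⟨t, ht, hh⟩ := hMj
            rw [if_pos ⟨t, ht, hh⟩, if_pos ⟨t, Nat.lt_succ_of_lt ht, hh⟩]
          · rw [if_neg hMj, if_neg ?_]
            · rw [Finset.prod_range_succ, hbip (2*(m:ℤ)+r) j (hk2.trans hj2.symm)]
              simp [mul_assoc]
            · rintro ⟨t, ht, hh⟩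
              rcases Nat.lt_succ_iff_lt_or_eq.mp ht with h' | rfl
              exacts [hMj ⟨t, h', hh⟩, hjk hh]
        · rw [if_neg hj2, ih1, if_neg (hMpar j hj2 m), if_neg (hMpar j hj2 (m+1)),
            Finset.prod_range_succ]
          ring
    · intro i j
      rw [hfold, mutY_snd n (2*(m:ℤ)+r) p i j]
      by_cases hik : i ≡ 2*(m:ℤ)+r [ZMOD (2*(n:ℤ))]
      · have hi2 : i ≡ r [ZMOD 2] := (hik.of_dvd two_dvd).trans hk2
        have L1 : ¬(¬ i ≡ r [ZMOD 2] ∧ ¬ j ≡ r [ZMOD 2]) := fun h => h.1 hi2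
        rw [if_pos (Or.inl hik), ih2, if_neg L1, add_zero, if_neg L1, add_zero]
        by_cases hMj : ∃ t : ℕ, t < m ∧ j ≡ 2*(t:ℤ)+r [ZMOD (2*(n:ℤ))]
        · obtain ⟨t, ht, hh⟩ := hMj
          have hj2 : j ≡ r [ZMOD 2] := hparj j t hh
          rw [if_pos (Or.inr ⟨t, ht, hh⟩), if_pos (Or.inl ⟨m, Nat.lt_succ_self m, hik⟩),
            hbip i j (hi2.trans hj2.symm)]
          simp
        · rw [if_neg (show ¬((∃ t : ℕ, t < m ∧ i ≡ 2*(t:ℤ)+r [ZMOD (2*(n:ℤ))]) ∨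
              (∃ t : ℕ, t < m ∧ j ≡ 2*(t:ℤ)+r [ZMOD (2*(n:ℤ))])) by
              rintro (h | h); exacts [hMj_of_k i hik h, hMj h]),
            if_pos (Or.inl ⟨m, Nat.lt_succ_self m, hik⟩)]
      · by_cases hjk : j ≡ 2*(m:ℤ)+r [ZMOD (2*(n:ℤ))]
        · have hj2 : j ≡ r [ZMOD 2] := (hjk.of_dvd two_dvd).trans hk2
          have L1 : ¬(¬ i ≡ r [ZMOD 2] ∧ ¬ j ≡ r [ZMOD 2]) := fun h => h.2 hj2
          rw [if_pos (Or.inr hjk), ih2, if_neg L1, add_zero, if_neg L1, add_zero]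
          by_cases hMi : ∃ t : ℕ, t < m ∧ i ≡ 2*(t:ℤ)+r [ZMOD (2*(n:ℤ))]
          · obtain ⟨t, ht, hh⟩ := hMi
            have hi2 : i ≡ r [ZMOD 2] := hparj i t hh
            rw [if_pos (Or.inl ⟨t, ht, hh⟩), if_pos (Or.inr ⟨m, Nat.lt_succ_self m, hjk⟩),
              hbip i j (hi2.trans hj2.symm)]
            simp
          · rw [if_neg (show ¬((∃ t : ℕ, t < m ∧ i ≡ 2*(t:ℤ)+r [ZMOD (2*(n:ℤ))]) ∨
                (∃ t : ℕ, t < m ∧ j ≡ 2*(t:ℤ)+r [ZMOD (2*(n:ℤ))])) by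
                rintro (h | h); exacts [hMi h, hMj_of_k j hjk h]),
              if_pos (Or.inr ⟨m, Nat.lt_succ_self m, hjk⟩)]
        · have hMi' : (∃ t : ℕ, t < m+1 ∧ i ≡ 2*(t:ℤ)+r [ZMOD (2*(n:ℤ))])
              ↔ (∃ t : ℕ, t < m ∧ i ≡ 2*(t:ℤ)+r [ZMOD (2*(n:ℤ))]) := by
            constructor
            · rintro ⟨t, ht, hh⟩
              rcases Nat.lt_succ_iff_lt_or_eq.mp ht with h' | rfl
              exacts [⟨t, h', hh⟩, absurd hh hik]
            · rintro ⟨t, ht, hh⟩; exact ⟨t, Nat.lt_succ_of_lt ht, hh⟩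
          have hMj' : (∃ t : ℕ, t < m+1 ∧ j ≡ 2*(t:ℤ)+r [ZMOD (2*(n:ℤ))])
              ↔ (∃ t : ℕ, t < m ∧ j ≡ 2*(t:ℤ)+r [ZMOD (2*(n:ℤ))]) := by
            constructor
            · rintro ⟨t, ht, hh⟩
              rcases Nat.lt_succ_iff_lt_or_eq.mp ht with h' | rfl
              exacts [⟨t, h', hh⟩, absurd hh hjk]
            · rintro ⟨t, ht, hh⟩; exact ⟨t, Nat.lt_succ_of_lt ht, hh⟩
          rw [if_neg (by tauto), hp2ik i, hp2kj j, ih2]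
          by_cases hi2 : i ≡ r [ZMOD 2]
          · rw [if_pos hi2]
            simp only [Int.sign_zero, zero_mul, add_zero]
            rw [if_neg (fun h : (¬i ≡ r [ZMOD 2] ∧ ¬j ≡ r [ZMOD 2]) => h.1 hi2), add_zero, if_neg (fun h : (¬i ≡ r [ZMOD 2] ∧ ¬j ≡ r [ZMOD 2]) => h.1 hi2), add_zero]
            simp only [hMi', hMj']
          · by_cases hj2 : j ≡ r [ZMOD 2]
            · rw [if_neg hi2, if_pos hj2]
              simp only [mul_zero, max_self, add_zero]
              rw [if_neg (fun h : (¬i ≡ r [ZMOD 2] ∧ ¬j ≡ r [ZMOD 2]) => h.2 hj2), add_zero, if_neg (fun h : (¬i ≡ r [ZMOD 2] ∧ ¬j ≡ r [ZMOD 2]) => h.2 hj2), add_zero]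
              simp only [hMi', hMj']
            · rw [if_neg hi2, if_neg hj2,
                if_neg (show ¬((∃ t : ℕ, t < m ∧ i ≡ 2*(t:ℤ)+r [ZMOD (2*(n:ℤ))]) ∨
                  (∃ t : ℕ, t < m ∧ j ≡ 2*(t:ℤ)+r [ZMOD (2*(n:ℤ))])) by
                  rintro (h | h); exacts [hMpar i hi2 m h, hMpar j hj2 m h]),
                if_pos (⟨hi2, hj2⟩ : ¬ i ≡ r [ZMOD 2] ∧ ¬ j ≡ r [ZMOD 2]),
                if_neg (show ¬((∃ t : ℕ, t < m+1 ∧ i ≡ 2*(t:ℤ)+r [ZMOD (2*(n:ℤ))]) ∨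
                  (∃ t : ℕ, t < m+1 ∧ j ≡ 2*(t:ℤ)+r [ZMOD (2*(n:ℤ))])) by
                  rintro (h | h); exacts [hMpar i hi2 (m+1) h, hMpar j hj2 (m+1) h]),
                if_pos (⟨hi2, hj2⟩ : ¬ i ≡ r [ZMOD 2] ∧ ¬ j ≡ r [ZMOD 2]),
                Finset.sum_range_succ]
              ring

end Fold

/-- **Lemma 3.2 (bipartite compound mutations).**
Let `(y,B)` be a rank-`2n` `Y`-seed with `B` skew-symmetric, `b_{ij} = 0`
whenever `i ≡ j (mod 2)` (the quiver is bipartite), and with as many length-2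
paths from `i` to `j` as from `j` to `i`.  Then the mutations `μ_i` for `i` odd
pairwise commute when applied to `(y,B)`, as do the `μ_i` for `i` even;
moreover `μ_{2n−1}∘⋯∘μ_3∘μ_1(y,B) = (y', −B)` and
`μ_{2n}∘⋯∘μ_4∘μ_2(y,B) = (y'', −B)` with `y'`, `y''` given by the displayed
formulas. -/
theorem stmt3 {K : Type*} [Field K] (n : ℕ) (hn : 1 ≤ n)
    (y : ℤ → K) (B : ℤ → ℤ → ℤ)
    (hyper : ∀ j : ℤ, y (j + 2*n) = y j)
    (hBper : ∀ i j : ℤ, B (i + 2*n) j = B i j ∧ B i (j + 2*n) = B i j)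
    (hy0 : ∀ k : ℤ, y k ≠ 0) (hy1 : ∀ k : ℤ, 1 + y k ≠ 0)
    (hskew : ∀ i j : ℤ, B j i = - B i j)
    (hbip : ∀ i j : ℤ, i ≡ j [ZMOD 2] → B i j = 0)
    (hpath : ∀ i j : ℤ,
      ∑ k ∈ Finset.Icc (1:ℤ) (2*n), max (B i k) 0 * max (B k j) 0 =
      ∑ k ∈ Finset.Icc (1:ℤ) (2*n), max (B j k) 0 * max (B k i) 0) :
    -- the odd mutations pairwise commute on (y,B)
    (∀ k l : ℤ, Odd k → Odd l →
      mutY n k (mutY n l (y, B)) = mutY n l (mutY n k (y, B))) ∧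
    -- the even mutations pairwise commute on (y,B)
    (∀ k l : ℤ, Even k → Even l →
      mutY n k (mutY n l (y, B)) = mutY n l (mutY n k (y, B))) ∧
    -- μ_{2n−1} ∘ ⋯ ∘ μ_3 ∘ μ_1 (y,B) = (y', −B)
    ((List.range n).foldl (fun q m => mutY n (2*(m:ℤ)+1) q) (y, B) =
      (fun j => if Odd j then (y j)⁻¹
        else y j * ∏ k ∈ Finset.Icc (1:ℤ) (2*n),
          y k ^ (max (B k j) 0) * (1 + y k) ^ (-(B k j)),
       fun i j => -(B i j))) ∧
    -- μ_{2n} ∘ ⋯ ∘ μ_4 ∘ μ_2 (y,B) = (y'', −B)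
    ((List.range n).foldl (fun q m => mutY n (2*(m:ℤ)+2) q) (y, B) =
      (fun j => if Even j then (y j)⁻¹
        else y j * ∏ k ∈ Finset.Icc (1:ℤ) (2*n),
          y k ^ (max (B k j) 0) * (1 + y k) ^ (-(B k j)),
       fun i j => -(B i j))) := by
  have two_dvd : (2:ℤ) ∣ 2*(n:ℤ) := ⟨n, rfl⟩
  have hP1 : ∀ i i' : ℤ, i ≡ i' [ZMOD (2*(n:ℤ))] → y i = y i' :=
    fun i i' h => periodic_cong _ y hyper h
  have hP2 : ∀ i i' j j' : ℤ, i ≡ i' [ZMOD (2*(n:ℤ))] → j ≡ j' [ZMOD (2*(n:ℤ))] →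
      B i j = B i' j' := by
    intro i i' j j' hi hj
    have e1 : B i j = B i' j := periodic_cong _ (fun x => B x j) (fun x => (hBper x j).1) hi
    have e2 : B i' j = B i' j' := periodic_cong _ (fun x => B i' x) (fun x => (hBper i' x).2) hj
    exact e1.trans e2
  have comm : ∀ k l : ℤ, k ≡ l [ZMOD 2] →
      mutY n k (mutY n l (y, B)) = mutY n l (mutY n k (y, B)) := by
    intro k l hpar
    by_cases hkl : k ≡ l [ZMOD (2*(n:ℤ))]
    · have e0 : mutY n k (y, B) = mutY n l (y, B) :=
        mutY_congr n k l (y, B) hkl (hP1 k l hkl)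
          (fun j => hP2 k l j j hkl (Int.ModEq.refl j))
          (fun i => hP2 i i k l (Int.ModEq.refl i) hkl)
      have hq := mutY_per n l (y, B) hP1 hP2
      have e1 : mutY n k (mutY n l (y, B)) = mutY n l (mutY n l (y, B)) :=
        mutY_congr n k l _ hkl (hq.1 k l hkl)
          (fun j => hq.2 k l j j hkl (Int.ModEq.refl j))
          (fun i => hq.2 i i k l (Int.ModEq.refl i) hkl)
      rw [e1, e0]
    · refine mutY_comm n k l (y, B) hkl ?_ ?_
      · intro j hj
        have hkj : k ≡ j [ZMOD 2] := hpar.trans (hj.of_dvd two_dvd).symm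
        exact ⟨hbip k j hkj, hbip j k hkj.symm⟩
      · intro j hj
        have hlj : l ≡ j [ZMOD 2] := hpar.symm.trans (hj.of_dvd two_dvd).symm
        exact ⟨hbip l j hlj, hbip j l hlj.symm⟩
  refine ⟨?_, ?_, ?_, ?_⟩
  · intro k l hk hl
    refine comm k l ?_
    rw [Int.modEq_iff_dvd]
    rw [Int.odd_iff] at hk hl
    omega
  · intro k l hk hl
    refine comm k l ?_
    rw [Int.modEq_iff_dvd]
    rw [Int.even_iff] at hk hl
    omega
  · obtain ⟨inv1, inv2⟩ := foldl_inv n 1 y B hyper hbip n le_rfl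
    refine Prod.ext ?_ ?_
    · funext j
      show _ = (if Odd j then (y j)⁻¹
        else y j * ∏ k ∈ Finset.Icc (1:ℤ) (2*n),
          y k ^ (max (B k j) 0) * (1 + y k) ^ (-(B k j)))
      rw [inv1 j]
      have hM := exists_mod_iff n hn 1 j
      by_cases hj : Odd j
      · rw [if_pos (hM.mpr ((odd_iff_mod j).mpr hj)), if_pos hj]
      · have hj2 : ¬ j ≡ 1 [ZMOD 2] := fun h => hj ((odd_iff_mod j).mp h)
        rw [if_neg (fun h => hj2 (hM.mp h)), if_neg hj,
          prod_split n (fun k => y k ^ (max (B k j) 0) * (1 + y k) ^ (-(B k j)))]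
        have he : ∏ t ∈ Finset.range n,
            (y (2*(t:ℤ)+2) ^ (max (B (2*(t:ℤ)+2) j) 0)
              * (1 + y (2*(t:ℤ)+2)) ^ (-(B (2*(t:ℤ)+2) j))) = 1 := by
          refine Finset.prod_eq_one fun t _ => ?_
          have hpar : (2*(t:ℤ)+2) ≡ j [ZMOD 2] := by
            rw [Int.modEq_iff_dvd] at hj2 ⊢; omega
          rw [hbip _ _ hpar]
          simp
        rw [he, mul_one]
    · funext i j
      show _ = -(B i j)
      rw [inv2 i j]
      have hMi := exists_mod_iff n hn 1 i
      have hMj := exists_mod_iff n hn 1 j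
      by_cases hi2 : i ≡ 1 [ZMOD 2]
      · rw [if_pos (Or.inl (hMi.mpr hi2)),
          if_neg (show ¬(¬ i ≡ 1 [ZMOD 2] ∧ ¬ j ≡ 1 [ZMOD 2]) from fun h => h.1 hi2), add_zero]
      · by_cases hj2 : j ≡ 1 [ZMOD 2]
        · rw [if_pos (Or.inr (hMj.mpr hj2)),
            if_neg (show ¬(¬ i ≡ 1 [ZMOD 2] ∧ ¬ j ≡ 1 [ZMOD 2]) from fun h => h.2 hj2), add_zero]
        · rw [if_neg (show ¬((∃ t : ℕ, t < n ∧ i ≡ 2*(t:ℤ)+1 [ZMOD (2*(n:ℤ))]) ∨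
              (∃ t : ℕ, t < n ∧ j ≡ 2*(t:ℤ)+1 [ZMOD (2*(n:ℤ))])) by
              rintro (h | h); exacts [hi2 (hMi.mp h), hj2 (hMj.mp h)]),
            if_pos (⟨hi2, hj2⟩ : ¬ i ≡ 1 [ZMOD 2] ∧ ¬ j ≡ 1 [ZMOD 2])]
          have hij : i ≡ j [ZMOD 2] := by
            rw [Int.modEq_iff_dvd] at hi2 hj2 ⊢; omega
          have hbij : B i j = 0 := hbip i j hij
          have hterm : ∀ t : ℕ,
              (B i (2*(t:ℤ)+1)).sign * max (B i (2*(t:ℤ)+1) * B (2*(t:ℤ)+1) j) 0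
              = max (B i (2*(t:ℤ)+1)) 0 * max (B (2*(t:ℤ)+1) j) 0
                - max (B j (2*(t:ℤ)+1)) 0 * max (B (2*(t:ℤ)+1) i) 0 := by
            intro t
            rw [sign_max_eq, ← hskew i (2*(t:ℤ)+1), ← hskew (2*(t:ℤ)+1) j]
            ring
          have hS : ∑ t ∈ Finset.range n,
              (B i (2*(t:ℤ)+1)).sign * max (B i (2*(t:ℤ)+1) * B (2*(t:ℤ)+1) j) 0 = 0 := by
            rw [Finset.sum_congr rfl (fun t _ => hterm t), Finset.sum_sub_distrib]
            have e1 : ∑ t ∈ Finset.range n,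
                max (B i (2*(t:ℤ)+1)) 0 * max (B (2*(t:ℤ)+1) j) 0
                = ∑ k ∈ Finset.Icc (1:ℤ) (2*n), max (B i k) 0 * max (B k j) 0 := by
              rw [sum_split n (fun k => max (B i k) 0 * max (B k j) 0)]
              have hz : ∑ t ∈ Finset.range n,
                  max (B i (2*(t:ℤ)+2)) 0 * max (B (2*(t:ℤ)+2) j) 0 = 0 := by
                refine Finset.sum_eq_zero fun t _ => ?_
                have hpar : i ≡ (2*(t:ℤ)+2) [ZMOD 2] := by
                  rw [Int.modEq_iff_dvd] at hi2 ⊢; omega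
                rw [hbip i _ hpar]
                simp
              rw [hz, add_zero]
            have e2 : ∑ t ∈ Finset.range n,
                max (B j (2*(t:ℤ)+1)) 0 * max (B (2*(t:ℤ)+1) i) 0
                = ∑ k ∈ Finset.Icc (1:ℤ) (2*n), max (B j k) 0 * max (B k i) 0 := by
              rw [sum_split n (fun k => max (B j k) 0 * max (B k i) 0)]
              have hz : ∑ t ∈ Finset.range n,
                  max (B j (2*(t:ℤ)+2)) 0 * max (B (2*(t:ℤ)+2) i) 0 = 0 := by
                refine Finset.sum_eq_zero fun t _ => ?_
                have hpar : j ≡ (2*(t:ℤ)+2) [ZMOD 2] := by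
                  rw [Int.modEq_iff_dvd] at hj2 ⊢; omega
                rw [hbip j _ hpar]
                simp
              rw [hz, add_zero]
            rw [e1, e2, hpath i j, sub_self]
          rw [hbij, hS]
          simp
  · obtain ⟨inv1, inv2⟩ := foldl_inv n 2 y B hyper hbip n le_rfl
    refine Prod.ext ?_ ?_
    · funext j
      show _ = (if Even j then (y j)⁻¹
        else y j * ∏ k ∈ Finset.Icc (1:ℤ) (2*n),
          y k ^ (max (B k j) 0) * (1 + y k) ^ (-(B k j)))
      rw [inv1 j]
      have hM := exists_mod_iff n hn 2 j
      by_cases hj : Even j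
      · rw [if_pos (hM.mpr ((even_iff_mod j).mpr hj)), if_pos hj]
      · have hj2 : ¬ j ≡ 2 [ZMOD 2] := fun h => hj ((even_iff_mod j).mp h)
        rw [if_neg (fun h => hj2 (hM.mp h)), if_neg hj,
          prod_split n (fun k => y k ^ (max (B k j) 0) * (1 + y k) ^ (-(B k j)))]
        have he : ∏ t ∈ Finset.range n,
            (y (2*(t:ℤ)+1) ^ (max (B (2*(t:ℤ)+1) j) 0)
              * (1 + y (2*(t:ℤ)+1)) ^ (-(B (2*(t:ℤ)+1) j))) = 1 := by
          refine Finset.prod_eq_one fun t _ => ?_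
          have hpar : (2*(t:ℤ)+1) ≡ j [ZMOD 2] := by
            rw [Int.modEq_iff_dvd] at hj2 ⊢; omega
          rw [hbip _ _ hpar]
          simp
        rw [he, one_mul]
    · funext i j
      show _ = -(B i j)
      rw [inv2 i j]
      have hMi := exists_mod_iff n hn 2 i
      have hMj := exists_mod_iff n hn 2 j
      by_cases hi2 : i ≡ 2 [ZMOD 2]
      · rw [if_pos (Or.inl (hMi.mpr hi2)),
          if_neg (show ¬(¬ i ≡ 2 [ZMOD 2] ∧ ¬ j ≡ 2 [ZMOD 2]) from fun h => h.1 hi2), add_zero]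
      · by_cases hj2 : j ≡ 2 [ZMOD 2]
        · rw [if_pos (Or.inr (hMj.mpr hj2)),
            if_neg (show ¬(¬ i ≡ 2 [ZMOD 2] ∧ ¬ j ≡ 2 [ZMOD 2]) from fun h => h.2 hj2), add_zero]
        · rw [if_neg (show ¬((∃ t : ℕ, t < n ∧ i ≡ 2*(t:ℤ)+2 [ZMOD (2*(n:ℤ))]) ∨
              (∃ t : ℕ, t < n ∧ j ≡ 2*(t:ℤ)+2 [ZMOD (2*(n:ℤ))])) by
              rintro (h | h); exacts [hi2 (hMi.mp h), hj2 (hMj.mp h)]),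
            if_pos (⟨hi2, hj2⟩ : ¬ i ≡ 2 [ZMOD 2] ∧ ¬ j ≡ 2 [ZMOD 2])]
          have hij : i ≡ j [ZMOD 2] := by
            rw [Int.modEq_iff_dvd] at hi2 hj2 ⊢; omega
          have hbij : B i j = 0 := hbip i j hij
          have hterm : ∀ t : ℕ,
              (B i (2*(t:ℤ)+2)).sign * max (B i (2*(t:ℤ)+2) * B (2*(t:ℤ)+2) j) 0
              = max (B i (2*(t:ℤ)+2)) 0 * max (B (2*(t:ℤ)+2) j) 0
                - max (B j (2*(t:ℤ)+2)) 0 * max (B (2*(t:ℤ)+2) i) 0 := by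
            intro t
            rw [sign_max_eq, ← hskew i (2*(t:ℤ)+2), ← hskew (2*(t:ℤ)+2) j]
            ring
          have hS : ∑ t ∈ Finset.range n,
              (B i (2*(t:ℤ)+2)).sign * max (B i (2*(t:ℤ)+2) * B (2*(t:ℤ)+2) j) 0 = 0 := by
            rw [Finset.sum_congr rfl (fun t _ => hterm t), Finset.sum_sub_distrib]
            have e1 : ∑ t ∈ Finset.range n,
                max (B i (2*(t:ℤ)+2)) 0 * max (B (2*(t:ℤ)+2) j) 0
                = ∑ k ∈ Finset.Icc (1:ℤ) (2*n), max (B i k) 0 * max (B k j) 0 := by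
              rw [sum_split n (fun k => max (B i k) 0 * max (B k j) 0)]
              have hz : ∑ t ∈ Finset.range n,
                  max (B i (2*(t:ℤ)+1)) 0 * max (B (2*(t:ℤ)+1) j) 0 = 0 := by
                refine Finset.sum_eq_zero fun t _ => ?_
                have hpar : i ≡ (2*(t:ℤ)+1) [ZMOD 2] := by
                  rw [Int.modEq_iff_dvd] at hi2 ⊢; omega
                rw [hbip i _ hpar]
                simp
              rw [hz, zero_add]
            have e2 : ∑ t ∈ Finset.range n,
                max (B j (2*(t:ℤ)+2)) 0 * max (B (2*(t:ℤ)+2) i) 0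
                = ∑ k ∈ Finset.Icc (1:ℤ) (2*n), max (B j k) 0 * max (B k i) 0 := by
              rw [sum_split n (fun k => max (B j k) 0 * max (B k i) 0)]
              have hz : ∑ t ∈ Finset.range n,
                  max (B j (2*(t:ℤ)+1)) 0 * max (B (2*(t:ℤ)+1) i) 0 = 0 := by
                refine Finset.sum_eq_zero fun t _ => ?_
                have hpar : j ≡ (2*(t:ℤ)+1) [ZMOD 2] := by
                  rw [Int.modEq_iff_dvd] at hj2 ⊢; omega
                rw [hbip j _ hpar]
                simp
              rw [hz, zero_add]
            rw [e1, e2, hpath i j, sub_self]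
          rw [hbij, hS]
          simp
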